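/- For every integer q ≥ 3 there exist a finite simple graph A and two distinct vertices u and v of A such that the number of edges of A, the number of edges of A − u, and the number of edges of A − v are each divisible by q, while A − {u, v} has exactly one edge. -/

import Mathlib

open SimpleGraph

lemma card_induce_edgeSet {V : Type} (A : SimpleGraph V) (s : Set V) :
    Nat.card (A.induce s).edgeSet
      = Nat.card {e : Sym2 V | e ∈ A.edgeSet ∧ ∀ z ∈ e, z ∈ s} := by
  rw [Nat.card_coe_set_eq, Nat.card_coe_set_eq,
    ← Set.ncard_image_of_injective _ (Sym2.map.injective Subtype.val_injective)]
  congr 1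
  ext e
  constructor
  · rintro ⟨e', he', rfl⟩
    induction e' using Sym2.ind with
    | _ a b =>
      refine ⟨he', ?_⟩
      intro z hz
      rw [Sym2.map_pair_eq, Sym2.mem_iff] at hz
      rcases hz with rfl | rfl
      · exact a.2
      · exact b.2
  · induction e using Sym2.ind with
    | _ a b =>
      rintro ⟨he, hmem⟩
      refine ⟨s(⟨a, hmem a (by simp)⟩, ⟨b, hmem b (by simp)⟩), he, by simp⟩

section
variable (q : ℕ)

abbrev Vq := Fin 2 ⊕ Fin 2 ⊕ Fin (q - 1)

def uq : Vq q := Sum.inl 0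
def vq : Vq q := Sum.inl 1
def xq : Vq q := Sum.inr (Sum.inl 0)
def yq : Vq q := Sum.inr (Sum.inl 1)
def wq (i : Fin (q - 1)) : Vq q := Sum.inr (Sum.inr i)

def Fq : Finset (Sym2 (Vq q)) :=
  ({s(uq q, vq q), s(xq q, yq q)} : Finset _)
    ∪ Finset.univ.image (fun i => s(uq q, wq q i))
    ∪ Finset.univ.image (fun i => s(vq q, wq q i))

def Aq : SimpleGraph (Vq q) := SimpleGraph.fromEdgeSet ↑(Fq q)

lemma edgeSet_Aq : (Aq q).edgeSet = ↑(Fq q) := by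
  rw [Aq, edgeSet_fromEdgeSet, sdiff_eq_left]
  rw [Set.disjoint_left]
  intro e he hdiag
  simp only [Fq, Finset.coe_union, Set.mem_union, Finset.coe_insert, Set.mem_insert_iff,
    Finset.coe_singleton, Set.mem_singleton_iff, Finset.coe_image, Set.mem_image,
    Finset.coe_univ, Set.image_univ, Set.mem_range] at he
  rcases he with ((rfl | rfl) | ⟨i, rfl⟩) | ⟨i, rfl⟩ <;>
    simp [Sym2.mk_isDiag_iff, uq, vq, xq, yq, wq] at hdiag

lemma card_Fq : (Fq q).card = 2 * (q - 1) + 2 := by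
  rw [Fq, Finset.card_union_of_disjoint, Finset.card_union_of_disjoint,
    Finset.card_image_of_injective, Finset.card_image_of_injective,
    Finset.card_insert_of_notMem, Finset.card_singleton, Finset.card_univ,
    Fintype.card_fin]
  · ring
  · simp [Sym2.eq_iff, uq, vq, xq, yq]
  · intro i j h
    simpa [Sym2.eq_iff, vq, wq] using h
  · intro i j h
    simpa [Sym2.eq_iff, uq, wq] using h
  · simp [Finset.disjoint_left, Sym2.eq_iff, uq, vq, xq, yq, wq]
  · simp [Finset.disjoint_left, Sym2.eq_iff, uq, vq, xq, yq, wq]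

end

section
variable (q : ℕ)

lemma setu_eq : {e : Sym2 (Vq q) | e ∈ (Aq q).edgeSet ∧ ∀ z ∈ e, z ≠ uq q}
    = ↑(({s(xq q, yq q)} : Finset _) ∪ Finset.univ.image (fun i => s(vq q, wq q i))) := by
  rw [edgeSet_Aq]
  ext e
  simp only [Fq, Set.mem_setOf_eq, Finset.coe_union, Finset.coe_insert, Finset.coe_singleton,
    Finset.coe_image, Finset.coe_univ, Set.image_univ, Set.mem_union, Set.mem_insert_iff,
    Set.mem_singleton_iff, Set.mem_range, Finset.mem_coe, Finset.mem_singleton]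
  constructor
  · rintro ⟨((rfl | rfl) | ⟨i, rfl⟩) | ⟨i, rfl⟩, hz⟩
    · exact absurd rfl (hz (uq q) (by simp))
    · exact Or.inl rfl
    · exact absurd rfl (hz (uq q) (by simp))
    · exact Or.inr ⟨i, rfl⟩
  · rintro (rfl | ⟨i, rfl⟩)
    · exact ⟨Or.inl (Or.inl (Or.inr rfl)), by simp [Sym2.ball, xq, yq, uq]⟩
    · exact ⟨Or.inr ⟨i, rfl⟩, by simp [Sym2.ball, vq, wq, uq]⟩

lemma setv_eq : {e : Sym2 (Vq q) | e ∈ (Aq q).edgeSet ∧ ∀ z ∈ e, z ≠ vq q}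
    = ↑(({s(xq q, yq q)} : Finset _) ∪ Finset.univ.image (fun i => s(uq q, wq q i))) := by
  rw [edgeSet_Aq]
  ext e
  simp only [Fq, Set.mem_setOf_eq, Finset.coe_union, Finset.coe_insert, Finset.coe_singleton,
    Finset.coe_image, Finset.coe_univ, Set.image_univ, Set.mem_union, Set.mem_insert_iff,
    Set.mem_singleton_iff, Set.mem_range, Finset.mem_coe, Finset.mem_singleton]
  constructor
  · rintro ⟨((rfl | rfl) | ⟨i, rfl⟩) | ⟨i, rfl⟩, hz⟩
    · exact absurd rfl (hz (vq q) (by simp))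
    · exact Or.inl rfl
    · exact Or.inr ⟨i, rfl⟩
    · exact absurd rfl (hz (vq q) (by simp))
  · rintro (rfl | ⟨i, rfl⟩)
    · exact ⟨Or.inl (Or.inl (Or.inr rfl)), by simp [Sym2.ball, xq, yq, vq]⟩
    · exact ⟨Or.inl (Or.inr ⟨i, rfl⟩), by simp [Sym2.ball, uq, wq, vq]⟩

lemma setuv_eq : {e : Sym2 (Vq q) | e ∈ (Aq q).edgeSet ∧ ∀ z ∈ e, z ≠ uq q ∧ z ≠ vq q}
    = {s(xq q, yq q)} := by
  rw [edgeSet_Aq]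
  ext e
  simp only [Fq, Set.mem_setOf_eq, Finset.coe_union, Finset.coe_insert, Finset.coe_singleton,
    Finset.coe_image, Finset.coe_univ, Set.image_univ, Set.mem_union, Set.mem_insert_iff,
    Set.mem_singleton_iff, Set.mem_range]
  constructor
  · rintro ⟨((rfl | rfl) | ⟨i, rfl⟩) | ⟨i, rfl⟩, hz⟩
    · exact absurd rfl ((hz (uq q) (by simp)).1
      )
    · rfl
    · exact absurd rfl ((hz (uq q) (by simp)).1)
    · exact absurd rfl ((hz (vq q) (by simp)).2)
  · rintro rfl
    exact ⟨Or.inl (Or.inl (Or.inr rfl)), by simp [Sym2.ball, xq, yq, uq, vq]⟩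

lemma card_side : (({s(xq q, yq q)} : Finset (Sym2 (Vq q)))
    ∪ Finset.univ.image (fun i => s(vq q, wq q i))).card = (q - 1) + 1 := by
  rw [Finset.card_union_of_disjoint, Finset.card_singleton, Finset.card_image_of_injective,
    Finset.card_univ, Fintype.card_fin]
  · ring
  · intro i j h; simpa [Sym2.eq_iff, vq, wq] using h
  · simp [Finset.disjoint_left, Sym2.eq_iff, xq, yq, vq, wq]

lemma card_side' : (({s(xq q, yq q)} : Finset (Sym2 (Vq q)))
    ∪ Finset.univ.image (fun i => s(uq q, wq q i))).card = (q - 1) + 1 := by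
  rw [Finset.card_union_of_disjoint, Finset.card_singleton, Finset.card_image_of_injective,
    Finset.card_univ, Fintype.card_fin]
  · ring
  · intro i j h; simpa [Sym2.eq_iff, uq, wq] using h
  · simp [Finset.disjoint_left, Sym2.eq_iff, xq, yq, uq, wq]

end

/-- For every integer `q ≥ 3` there is a finite simple graph `A` with two
distinct vertices `u, v` such that the numbers of edges of `A`, `A − u` and `A − v` are
divisible by `q`, while `A − {u,v}` has exactly one edge. -/
theorem stmt_4 (q : ℕ) (hq : 3 ≤ q) :
    ∃ (V : Type) (_ : Fintype V) (A : SimpleGraph V) (u v : V), u ≠ v ∧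
      q ∣ Nat.card A.edgeSet ∧
      q ∣ Nat.card (A.induce {x : V | x ≠ u}).edgeSet ∧
      q ∣ Nat.card (A.induce {x : V | x ≠ v}).edgeSet ∧
      Nat.card (A.induce {x : V | x ≠ u ∧ x ≠ v}).edgeSet = 1 := by
  refine ⟨Vq q, inferInstance, Aq q, uq q, vq q, by simp [uq, vq], ?_, ?_, ?_, ?_⟩
  · rw [edgeSet_Aq]
    rw [Nat.card_coe_set_eq, Set.ncard_coe_finset, card_Fq]
    exact ⟨2, by omega⟩
  · rw [card_induce_edgeSet]
    have : {e : Sym2 (Vq q) | e ∈ (Aq q).edgeSet ∧ ∀ z ∈ e, z ∈ {x : Vq q | x ≠ uq q}}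
        = {e : Sym2 (Vq q) | e ∈ (Aq q).edgeSet ∧ ∀ z ∈ e, z ≠ uq q} := rfl
    rw [this, setu_eq, Nat.card_coe_set_eq, Set.ncard_coe_finset, card_side]
    exact ⟨1, by omega⟩
  · rw [card_induce_edgeSet]
    have : {e : Sym2 (Vq q) | e ∈ (Aq q).edgeSet ∧ ∀ z ∈ e, z ∈ {x : Vq q | x ≠ vq q}}
        = {e : Sym2 (Vq q) | e ∈ (Aq q).edgeSet ∧ ∀ z ∈ e, z ≠ vq q} := rfl
    rw [this, setv_eq, Nat.card_coe_set_eq, Set.ncard_coe_finset, card_side']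
    exact ⟨1, by omega⟩
  · rw [card_induce_edgeSet]
    have : {e : Sym2 (Vq q) | e ∈ (Aq q).edgeSet ∧
        ∀ z ∈ e, z ∈ {x : Vq q | x ≠ uq q ∧ x ≠ vq q}}
        = {e : Sym2 (Vq q) | e ∈ (Aq q).edgeSet ∧ ∀ z ∈ e, z ≠ uq q ∧ z ≠ vq q} := rfl
    rw [this, setuv_eq, Nat.card_coe_set_eq, Set.ncard_singleton]
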